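/- Let H be a quasitriangular Hopf algebra over ℂ with universal R-matrix R, and (ρ, V) a finite-dimensional representation with basis v₁,…,v_N and R-matrix entries R^{ij}_{kl}. Suppose w = g^{ij} v_j⊗v_i is an invariant vector of V⊗V whose coefficient matrix (g^{ij}) is invertible, and let g̃ be the inverse transpose of g, so that g^{ik} g̃_{jk} = δ^i_j = g^{ki} g̃_{kj}. Then the four crossing relations hold: g^{ij} δ^k_l = R^{jk}_{np} R^{ip}_{ml} g^{mn}; δ^i_j g̃_{kl} = g̃_{mn} R^{mi}_{kp} R^{np}_{lj}; g^{ij} δ^k_l = R^{ki}_{pm} R^{pj}_{ln} g^{mn}; δ^i_j g̃_{kl} = g̃_{mn} R^{in}_{pl} R^{pm}_{jk}. -/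

import Mathlib

open TensorProduct

/-- `a ⊗ b ↦ a ⊗ (b ⊗ 1)` -/
noncomputable def emb12 (H : Type*) [Ring H] [Algebra ℂ H] :
    H ⊗[ℂ] H →ₗ[ℂ] H ⊗[ℂ] (H ⊗[ℂ] H) :=
  TensorProduct.map LinearMap.id (Algebra.TensorProduct.includeLeft (S := ℂ)).toLinearMap

/-- `a ⊗ b ↦ a ⊗ (1 ⊗ b)` -/
noncomputable def emb13 (H : Type*) [Ring H] [Algebra ℂ H] :
    H ⊗[ℂ] H →ₗ[ℂ] H ⊗[ℂ] (H ⊗[ℂ] H) :=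
  TensorProduct.map LinearMap.id (Algebra.TensorProduct.includeRight).toLinearMap

/-- `a ⊗ b ↦ 1 ⊗ (a ⊗ b)` -/
noncomputable def emb23 (H : Type*) [Ring H] [Algebra ℂ H] :
    H ⊗[ℂ] H →ₗ[ℂ] H ⊗[ℂ] (H ⊗[ℂ] H) :=
  (Algebra.TensorProduct.includeRight).toLinearMap

/-- `ρ ⊗ ρ` applied to an element of `H ⊗ H`, as an endomorphism of `V ⊗ V`. -/
noncomputable def rep2 {H V : Type*} [Ring H] [HopfAlgebra ℂ H] [AddCommGroup V] [Module ℂ V]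
    (ρ : H →ₐ[ℂ] Module.End ℂ V) (a : H ⊗[ℂ] H) : Module.End ℂ (V ⊗[ℂ] V) :=
  (TensorProduct.homTensorHomMap (RingHom.id ℂ) V V V V) ((TensorProduct.map ρ.toLinearMap ρ.toLinearMap) a)

section aux
variable {H V : Type*} [Ring H] [HopfAlgebra ℂ H] [AddCommGroup V] [Module ℂ V]
variable {N : ℕ} (v : Module.Basis (Fin N) ℂ V) (ρ : H →ₐ[ℂ] Module.End ℂ V)

/-- matrix coefficient functional of ρ -/
noncomputable def phi (a b : Fin N) : H →ₗ[ℂ] ℂ :=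
  v.coord a ∘ₗ LinearMap.applyₗ (v b) ∘ₗ ρ.toLinearMap

lemma phi_apply (a b : Fin N) (x : H) : phi v ρ a b x = v.repr (ρ x (v b)) a := rfl

lemma phi_mul (a b : Fin N) (x y : H) :
    phi v ρ a b (x * y) = ∑ c, phi v ρ a c x * phi v ρ c b y := by
  have h : ρ y (v b) = ∑ c, v.repr (ρ y (v b)) c • v c := (v.sum_repr _).symm
  simp only [phi_apply, map_mul, Module.End.mul_apply]
  conv_lhs => rw [h]
  rw [map_sum, map_sum]
  simp [mul_comm]

/-- extract `phi a b` from the second leg -/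
noncomputable def Lmap (a b : Fin N) : H ⊗[ℂ] H →ₗ[ℂ] H :=
  (TensorProduct.rid ℂ H).toLinearMap ∘ₗ TensorProduct.map LinearMap.id (phi v ρ a b)

lemma Lmap_tmul (a b : Fin N) (x y : H) :
    Lmap v ρ a b (x ⊗ₜ[ℂ] y) = phi v ρ a b y • x := by
  simp [Lmap]

/-- extract `phi a b` from the first leg -/
noncomputable def Mmap (a b : Fin N) : H ⊗[ℂ] H →ₗ[ℂ] H :=
  (TensorProduct.lid ℂ H).toLinearMap ∘ₗ TensorProduct.map (phi v ρ a b) LinearMap.id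

lemma Mmap_tmul (a b : Fin N) (x y : H) :
    Mmap v ρ a b (x ⊗ₜ[ℂ] y) = phi v ρ a b x • y := by
  simp [Mmap]

lemma key1 (a b : Fin N) (t : H ⊗[ℂ] H) :
    (TensorProduct.map LinearMap.id (Lmap v ρ a b))
      ((TensorProduct.assoc ℂ H H H)
        ((TensorProduct.map (Coalgebra.comul (R := ℂ)) LinearMap.id) t))
    = Coalgebra.comul (R := ℂ) (Lmap v ρ a b t) := by
  have hsub : ∀ (s : H ⊗[ℂ] H) (y : H),
      (TensorProduct.map LinearMap.id (Lmap v ρ a b))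
        ((TensorProduct.assoc ℂ H H H) (s ⊗ₜ[ℂ] y)) = phi v ρ a b y • s := by
    intro s y
    induction s using TensorProduct.induction_on with
    | zero => rw [TensorProduct.zero_tmul, LinearEquiv.map_zero, map_zero, smul_zero]
    | tmul u w => simp [TensorProduct.assoc_tmul, Lmap_tmul, TensorProduct.tmul_smul]
    | add s₁ s₂ h₁ h₂ =>
        rw [TensorProduct.add_tmul, map_add, map_add, h₁, h₂, smul_add]
  induction t using TensorProduct.induction_on with
  | zero =>
      rw [show (TensorProduct.map (Coalgebra.comul (R := ℂ)) (LinearMap.id (M := H)))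
            (0 : H ⊗[ℂ] H) = 0 from map_zero _,
          LinearEquiv.map_zero,
          show (TensorProduct.map (LinearMap.id (M := H)) (Lmap v ρ a b))
            (0 : H ⊗[ℂ] (H ⊗[ℂ] H)) = 0 from map_zero _,
          show (Lmap v ρ a b) (0 : H ⊗[ℂ] H) = 0 from map_zero _, map_zero]
  | tmul x y =>
      rw [TensorProduct.map_tmul, hsub, Lmap_tmul, map_smul]
      simp
  | add t₁ t₂ h₁ h₂ => simp only [map_add, h₁, h₂]

lemma key2 (a b : Fin N) (α β : H ⊗[ℂ] H) :
    (TensorProduct.map LinearMap.id (Lmap v ρ a b)) (emb13 H α * emb23 H β)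
    = ∑ c, (Lmap v ρ a c α) ⊗ₜ[ℂ] (Lmap v ρ c b β) := by
  induction α using TensorProduct.induction_on with
  | zero => simp
  | add α₁ α₂ h₁ h₂ =>
      rw [map_add, add_mul, map_add, h₁, h₂, ← Finset.sum_add_distrib]
      refine Finset.sum_congr rfl fun c _ => ?_
      rw [map_add, TensorProduct.add_tmul]
  | tmul x y =>
      induction β using TensorProduct.induction_on with
      | zero => simp
      | add β₁ β₂ h₁ h₂ =>
          rw [map_add, mul_add, map_add, h₁, h₂, ← Finset.sum_add_distrib]
          refine Finset.sum_congr rfl fun c _ => ?_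
          rw [map_add, TensorProduct.tmul_add]
      | tmul u w =>
          simp only [emb13, emb23, TensorProduct.map_tmul, AlgHom.toLinearMap_apply,
            Algebra.TensorProduct.includeRight_apply, LinearMap.id_coe, id_eq,
            Algebra.TensorProduct.tmul_mul_tmul, one_mul, mul_one]
          rw [Lmap_tmul, phi_mul, TensorProduct.tmul_smul, Finset.sum_smul]
          refine Finset.sum_congr rfl fun c _ => ?_
          rw [Lmap_tmul, Lmap_tmul, ← TensorProduct.smul_tmul', TensorProduct.tmul_smul,
            smul_smul]

end aux

section aux2
variable {H V : Type*} [Ring H] [HopfAlgebra ℂ H] [AddCommGroup V] [Module ℂ V]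
variable {N : ℕ} (v : Module.Basis (Fin N) ℂ V) (ρ : H →ₐ[ℂ] Module.End ℂ V)

lemma key1' (a b : Fin N) (t : H ⊗[ℂ] H) :
    ((TensorProduct.lid ℂ (H ⊗[ℂ] H)).toLinearMap ∘ₗ
        TensorProduct.map (phi v ρ a b) LinearMap.id)
      ((TensorProduct.map LinearMap.id (Coalgebra.comul (R := ℂ))) t)
    = Coalgebra.comul (R := ℂ) (Mmap v ρ a b t) := by
  induction t using TensorProduct.induction_on with
  | zero =>
      rw [show (TensorProduct.map (LinearMap.id (M := H)) (Coalgebra.comul (R := ℂ)))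
            (0 : H ⊗[ℂ] H) = 0 from map_zero _, map_zero,
          show (Mmap v ρ a b) (0 : H ⊗[ℂ] H) = 0 from map_zero _, map_zero]
  | tmul x y =>
      simp only [TensorProduct.map_tmul, LinearMap.id_coe, id_eq, LinearMap.comp_apply,
        LinearEquiv.coe_coe, TensorProduct.lid_tmul, Mmap_tmul, map_smul]
  | add t₁ t₂ h₁ h₂ => simp only [map_add, h₁, h₂]

lemma key2' (a b : Fin N) (α β : H ⊗[ℂ] H) :
    ((TensorProduct.lid ℂ (H ⊗[ℂ] H)).toLinearMap ∘ₗ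
        TensorProduct.map (phi v ρ a b) LinearMap.id) (emb13 H α * emb12 H β)
    = ∑ c, (Mmap v ρ c b β) ⊗ₜ[ℂ] (Mmap v ρ a c α) := by
  induction α using TensorProduct.induction_on with
  | zero => simp
  | add α₁ α₂ h₁ h₂ =>
      rw [map_add, add_mul, map_add, h₁, h₂, ← Finset.sum_add_distrib]
      refine Finset.sum_congr rfl fun c _ => ?_
      rw [map_add, TensorProduct.tmul_add]
  | tmul x y =>
      induction β using TensorProduct.induction_on with
      | zero => simp
      | add β₁ β₂ h₁ h₂ =>
          rw [map_add, mul_add, map_add, h₁, h₂, ← Finset.sum_add_distrib]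
          refine Finset.sum_congr rfl fun c _ => ?_
          rw [map_add, TensorProduct.add_tmul]
      | tmul u w =>
          simp only [emb13, emb12, TensorProduct.map_tmul, AlgHom.toLinearMap_apply,
            Algebra.TensorProduct.includeRight_apply, Algebra.TensorProduct.includeLeft_apply,
            LinearMap.id_coe, id_eq, Algebra.TensorProduct.tmul_mul_tmul, one_mul, mul_one]
          simp only [LinearMap.comp_apply, TensorProduct.map_tmul, LinearEquiv.coe_coe,
            TensorProduct.lid_tmul, LinearMap.id_coe, id_eq, phi_mul, Finset.sum_smul]
          refine Finset.sum_congr rfl fun c _ => ?_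
          rw [Mmap_tmul, Mmap_tmul, mul_comm, mul_smul, ← TensorProduct.tmul_smul,
            TensorProduct.smul_tmul']

lemma rep2_tmul (x y : H) :
    rep2 ρ (x ⊗ₜ[ℂ] y) = TensorProduct.map (ρ x) (ρ y) := by
  simp [rep2]

lemma rep2_add (s t : H ⊗[ℂ] H) : rep2 ρ (s + t) = rep2 ρ s + rep2 ρ t := by
  simp [rep2]

lemma rep2_zero : rep2 ρ (0 : H ⊗[ℂ] H) = 0 := by simp [rep2]

lemma rep2_mul (s t : H ⊗[ℂ] H) : rep2 ρ (s * t) = rep2 ρ s * rep2 ρ t := by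
  induction s using TensorProduct.induction_on with
  | zero => rw [zero_mul, rep2_zero, zero_mul]
  | add s₁ s₂ h₁ h₂ => rw [add_mul, rep2_add, h₁, h₂, rep2_add, add_mul]
  | tmul x y =>
      induction t using TensorProduct.induction_on with
      | zero => rw [mul_zero, rep2_zero, mul_zero]
      | add t₁ t₂ h₁ h₂ => rw [mul_add, rep2_add, h₁, h₂, rep2_add, mul_add]
      | tmul u w =>
          rw [Algebra.TensorProduct.tmul_mul_tmul, rep2_tmul, rep2_tmul, rep2_tmul]
          simp only [map_mul, Module.End.mul_eq_comp, TensorProduct.map_comp]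

lemma rep2_one : rep2 ρ (1 : H ⊗[ℂ] H) = 1 := by
  rw [Algebra.TensorProduct.one_def, rep2_tmul, map_one]
  exact TensorProduct.map_id

lemma rho_Lmap (a b k : Fin N) (α : H ⊗[ℂ] H) :
    ρ (Lmap v ρ a b α) (v k)
      = (TensorProduct.rid ℂ V)
          ((TensorProduct.map LinearMap.id (v.coord a)) (rep2 ρ α (v k ⊗ₜ[ℂ] v b))) := by
  induction α using TensorProduct.induction_on with
  | zero => simp [rep2]
  | add s t h₁ h₂ =>
      rw [map_add, map_add, LinearMap.add_apply, h₁, h₂, rep2_add, LinearMap.add_apply,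
        map_add, map_add]
  | tmul x y =>
      rw [Lmap_tmul, rep2_tmul, TensorProduct.map_tmul, TensorProduct.map_tmul]
      simp [phi_apply, Module.Basis.coord_apply, TensorProduct.smul_tmul']

lemma rho_Mmap (a b l : Fin N) (α : H ⊗[ℂ] H) :
    ρ (Mmap v ρ a b α) (v l)
      = (TensorProduct.lid ℂ V)
          ((TensorProduct.map (v.coord a) LinearMap.id) (rep2 ρ α (v b ⊗ₜ[ℂ] v l))) := by
  induction α using TensorProduct.induction_on with
  | zero => simp [rep2]
  | add s t h₁ h₂ =>
      rw [map_add, map_add, LinearMap.add_apply, h₁, h₂, rep2_add, LinearMap.add_apply,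
        map_add, map_add]
  | tmul x y =>
      rw [Mmap_tmul, rep2_tmul, TensorProduct.map_tmul, TensorProduct.map_tmul]
      simp [phi_apply, Module.Basis.coord_apply]

/-- extracting coefficients of a vector expanded in a basis -/
lemma coeff_eq (c1 c2 : Fin N → ℂ)
    (h : (∑ i, c1 i • v i) = (∑ i, c2 i • v i)) : ∀ i, c1 i = c2 i := by
  intro i
  have h2 := congrArg (fun z => v.repr z i) h
  simpa [Finsupp.single_apply, Finset.sum_ite_eq] using h2

/-- extracting coefficients of a vector in `V ⊗ V` expanded in the basis `v ⊗ v` -/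
lemma coeff2_eq (c1 c2 : Fin N → Fin N → ℂ)
    (h : (∑ p, ∑ q, c1 p q • (v p ⊗ₜ[ℂ] v q)) = (∑ p, ∑ q, c2 p q • (v p ⊗ₜ[ℂ] v q))) :
    ∀ p q, c1 p q = c2 p q := by
  intro p q
  have h2 := congrArg (fun z => (v.tensorProduct v).repr z (p, q)) h
  simpa [Module.Basis.tensorProduct_repr_tmul_apply, Finsupp.single_apply,
    Finset.sum_ite_eq, mul_ite, ite_mul, mul_zero, zero_mul, mul_one] using h2

lemma rep2_sum {ι : Type*} (s : Finset ι) (f : ι → H ⊗[ℂ] H) :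
    rep2 ρ (∑ c ∈ s, f c) = ∑ c ∈ s, rep2 ρ (f c) := by
  simp [rep2, map_sum]

end aux2

/-- rotate a triple sum -/
lemma sum3_rot {ι M : Type*} [Fintype ι] [AddCommMonoid M] (f : ι → ι → ι → M) :
    ∑ a, ∑ b, ∑ c, f a b c = ∑ c, ∑ a, ∑ b, f a b c := by
  calc ∑ a, ∑ b, ∑ c, f a b c
      = ∑ a, ∑ c, ∑ b, f a b c := Finset.sum_congr rfl fun a _ => Finset.sum_comm
    _ = ∑ c, ∑ a, ∑ b, f a b c := Finset.sum_comm

set_option maxHeartbeats 4000000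

theorem stmt11 (H V : Type*) [Ring H] [HopfAlgebra ℂ H] [AddCommGroup V] [Module ℂ V]
    (N : ℕ) (v : Module.Basis (Fin N) ℂ V) (ρ : H →ₐ[ℂ] Module.End ℂ V)
    (R Rinv : H ⊗[ℂ] H)
    (hRinv : R * Rinv = 1) (hRinv' : Rinv * R = 1)
    (h_intw : ∀ x : H,
      (TensorProduct.comm ℂ H H) (Coalgebra.comul (R := ℂ) x)
        = R * (Coalgebra.comul (R := ℂ) x) * Rinv)
    (h_qt1 : (TensorProduct.assoc ℂ H H H)
        ((TensorProduct.map (Coalgebra.comul (R := ℂ)) LinearMap.id) R)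
        = emb13 H R * emb23 H R)
    (h_qt2 : (TensorProduct.map LinearMap.id (Coalgebra.comul (R := ℂ))) R
        = emb13 H R * emb12 H R)
    (Rm : Fin N → Fin N → Fin N → Fin N → ℂ)
    (hRm : ∀ k l : Fin N,
      rep2 ρ R (v k ⊗ₜ[ℂ] v l) = ∑ i, ∑ j, Rm i j k l • (v i ⊗ₜ[ℂ] v j))
    (g gt : Fin N → Fin N → ℂ)
    (hwinv : ∀ x : H, rep2 ρ (Coalgebra.comul (R := ℂ) x) (∑ i, ∑ j, g i j • (v j ⊗ₜ[ℂ] v i))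
      = Coalgebra.counit (R := ℂ) x • (∑ i, ∑ j, g i j • (v j ⊗ₜ[ℂ] v i)))
    (hg : ∀ i j : Fin N, ∑ k, g i k * gt j k = if i = j then (1 : ℂ) else 0)
    (hg' : ∀ i j : Fin N, ∑ k, g k i * gt k j = if i = j then (1 : ℂ) else 0) :
    ∀ i j k l : Fin N,
      (g i j * (if k = l then (1 : ℂ) else 0)
        = ∑ n, ∑ p, ∑ m, Rm j k n p * Rm i p m l * g m n)
      ∧ ((if i = j then (1 : ℂ) else 0) * gt k l
        = ∑ m, ∑ n, ∑ p, gt m n * Rm m i k p * Rm n p l j)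
      ∧ (g i j * (if k = l then (1 : ℂ) else 0)
        = ∑ p, ∑ m, ∑ n, Rm k i p m * Rm p j l n * g m n)
      ∧ ((if i = j then (1 : ℂ) else 0) * gt k l
        = ∑ m, ∑ n, ∑ p, gt m n * Rm i n p l * Rm p m j k) := by
  intro i0 j0 k0 l0
  -- the two operator families
  set L : Fin N → Fin N → H := fun a b => Lmap v ρ a b R with hLdef
  set Me : Fin N → Fin N → H := fun a b => Mmap v ρ a b R with hMdef
  -- coproducts
  have hcomulL : ∀ a b, Coalgebra.comul (R := ℂ) (L a b) = ∑ c, L a c ⊗ₜ[ℂ] L c b := by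
    intro a b
    have h := congrArg (fun z => (TensorProduct.map LinearMap.id (Lmap v ρ a b)) z) h_qt1
    rw [key1, key2] at h
    exact h
  have hcomulM : ∀ a b, Coalgebra.comul (R := ℂ) (Me a b) = ∑ c, Me c b ⊗ₜ[ℂ] Me a c := by
    intro a b
    have h := congrArg (fun z =>
      ((TensorProduct.lid ℂ (H ⊗[ℂ] H)).toLinearMap ∘ₗ
        TensorProduct.map (phi v ρ a b) LinearMap.id) z) h_qt2
    rw [key1', key2'] at h
    exact h
  -- matrix entries
  have hLe : ∀ a b k, ρ (L a b) (v k) = ∑ i, Rm i a k b • v i := by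
    intro a b k
    rw [hLdef]
    simp only
    rw [rho_Lmap, hRm k b]
    simp [Module.Basis.coord_apply, Finsupp.single_apply, TensorProduct.smul_tmul',
      Finset.sum_ite_eq, mul_comm]
  have hMe : ∀ a b l, ρ (Me a b) (v l) = ∑ j, Rm a j b l • v j := by
    intro a b l
    rw [hMdef]
    simp only
    rw [rho_Mmap, hRm b l]
    simp [Module.Basis.coord_apply, Finsupp.single_apply, Finset.sum_ite_eq, mul_comm]
  -- counit partial relations
  have hcL : ∀ a b, (∑ c, Coalgebra.counit (R := ℂ) (L a c) • L c b) = L a b := by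
    intro a b
    have h1 := Coalgebra.rTensor_counit_comul (R := ℂ) (L a b)
    rw [hcomulL, map_sum] at h1
    simp only [LinearMap.rTensor_tmul] at h1
    have h2 := congrArg (TensorProduct.lid ℂ H) h1
    rw [map_sum] at h2
    simpa using h2
  have hcM : ∀ a b, (∑ c, Coalgebra.counit (R := ℂ) (Me a c) • Me c b) = Me a b := by
    intro a b
    have h1 := Coalgebra.lTensor_counit_comul (R := ℂ) (Me a b)
    rw [hcomulM, map_sum] at h1
    simp only [LinearMap.lTensor_tmul] at h1
    have h2 := congrArg (TensorProduct.rid ℂ H) h1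
    rw [map_sum] at h2
    simpa using h2
  -- scalar counit relations
  have hcLs : ∀ a b k i', (∑ c, Coalgebra.counit (R := ℂ) (L a c) * Rm i' c k b)
      = Rm i' a k b := by
    intro a b k i'
    have h := congrArg (fun z => ρ z (v k)) (hcL a b)
    simp only [map_sum, map_smul, LinearMap.sum_apply, LinearMap.smul_apply, hLe] at h
    have h' : (∑ i', (∑ c, Coalgebra.counit (R := ℂ) (L a c) * Rm i' c k b) • v i')
        = ∑ i', Rm i' a k b • v i' := by
      rw [← h]
      simp only [Finset.sum_smul, Finset.smul_sum, smul_smul]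
      exact Finset.sum_comm
    exact coeff_eq v _ _ h' i'
  have hcMs : ∀ a b l j', (∑ c, Coalgebra.counit (R := ℂ) (Me a c) * Rm c j' b l)
      = Rm a j' b l := by
    intro a b l j'
    have h := congrArg (fun z => ρ z (v l)) (hcM a b)
    simp only [map_sum, map_smul, LinearMap.sum_apply, LinearMap.smul_apply, hMe] at h
    have h' : (∑ j', (∑ c, Coalgebra.counit (R := ℂ) (Me a c) * Rm c j' b l) • v j')
        = ∑ j', Rm a j' b l • v j' := by
      rw [← h]
      simp only [Finset.sum_smul, Finset.smul_sum, smul_smul]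
      exact Finset.sum_comm
    exact coeff_eq v _ _ h' j'
  -- matrix of rep2 R and its inverse
  set B2 : Module.Basis (Fin N × Fin N) ℂ (V ⊗[ℂ] V) := v.tensorProduct v with hB2
  set MR : Matrix (Fin N × Fin N) (Fin N × Fin N) ℂ :=
    fun p q => Rm p.1 p.2 q.1 q.2 with hMRdef
  have hMRmat : LinearMap.toMatrix B2 B2 (rep2 ρ R) = MR := by
    ext ⟨pi, pj⟩ ⟨qi, qj⟩
    rw [LinearMap.toMatrix_apply, hB2, Module.Basis.tensorProduct_apply, hRm]
    simp [Module.Basis.tensorProduct_repr_tmul_apply, Finsupp.single_apply,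
      Finset.sum_ite_eq, mul_ite, ite_mul, mul_zero, zero_mul, hMRdef]
  set MRi : Matrix (Fin N × Fin N) (Fin N × Fin N) ℂ :=
    LinearMap.toMatrix B2 B2 (rep2 ρ Rinv) with hMRidef
  have hone : LinearMap.toMatrix B2 B2 (1 : Module.End ℂ (V ⊗[ℂ] V)) = 1 :=
    LinearMap.toMatrix_id B2
  have hMM : MR * MRi = 1 := by
    rw [← hMRmat, hMRidef, ← LinearMap.toMatrix_comp B2 B2 B2, ← Module.End.mul_eq_comp,
      ← rep2_mul, hRinv, rep2_one, hone]
  have hMM' : MRi * MR = 1 := by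
    rw [← hMRmat, hMRidef, ← LinearMap.toMatrix_comp B2 B2 B2, ← Module.End.mul_eq_comp,
      ← rep2_mul, hRinv', rep2_one, hone]
  -- counit of L and Me is the identity matrix
  have heL : ∀ a c, Coalgebra.counit (R := ℂ) (L a c) = if a = c then (1 : ℂ) else 0 := by
    set E : Matrix (Fin N × Fin N) (Fin N × Fin N) ℂ :=
      fun p q => if p.1 = q.1 then Coalgebra.counit (R := ℂ) (L p.2 q.2) else 0 with hEdef
    have hE : E * MR = MR := by
      ext p q
      rw [Matrix.mul_apply, Fintype.sum_prod_type]
      simp only [hEdef, hMRdef, ite_mul, zero_mul]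
      have hinner : ∀ x : Fin N,
          (∑ x1, if p.1 = x then Coalgebra.counit (R := ℂ) (L p.2 x1) * Rm x x1 q.1 q.2 else 0)
          = if p.1 = x then Rm x p.2 q.1 q.2 else 0 := by
        intro x
        by_cases hx : p.1 = x
        · simp [hx, hcLs]
        · simp [hx]
      rw [Finset.sum_congr rfl fun x _ => hinner x]
      simp
    have hE1 : E = 1 := by
      calc E = E * (MR * MRi) := by rw [hMM, Matrix.mul_one]
        _ = (E * MR) * MRi := by rw [Matrix.mul_assoc]
        _ = MR * MRi := by rw [hE]
        _ = 1 := hMM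
    intro a c
    have := congrFun (congrFun hE1 (i0, a)) (i0, c)
    simpa [hEdef, Matrix.one_apply, Prod.ext_iff] using this
  have heM : ∀ a c, Coalgebra.counit (R := ℂ) (Me a c) = if a = c then (1 : ℂ) else 0 := by
    set E : Matrix (Fin N × Fin N) (Fin N × Fin N) ℂ :=
      fun p q => if p.2 = q.2 then Coalgebra.counit (R := ℂ) (Me p.1 q.1) else 0 with hEdef
    have hE : E * MR = MR := by
      ext p q
      rw [Matrix.mul_apply, Fintype.sum_prod_type]
      simp only [hEdef, hMRdef, ite_mul, zero_mul]
      rw [Finset.sum_comm]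
      have hinner : ∀ y : Fin N,
          (∑ x, if p.2 = y then Coalgebra.counit (R := ℂ) (Me p.1 x) * Rm x y q.1 q.2 else 0)
          = if p.2 = y then Rm p.1 y q.1 q.2 else 0 := by
        intro y
        by_cases hy : p.2 = y
        · simp [hy, hcMs]
        · simp [hy]
      rw [Finset.sum_congr rfl fun y _ => hinner y]
      simp
    have hE1 : E = 1 := by
      calc E = E * (MR * MRi) := by rw [hMM, Matrix.mul_one]
        _ = (E * MR) * MRi := by rw [Matrix.mul_assoc]
        _ = MR * MRi := by rw [hE]
        _ = 1 := hMM
    intro a c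
    have := congrFun (congrFun hE1 (a, i0)) (c, i0)
    simpa [hEdef, Matrix.one_apply, Prod.ext_iff] using this
  -- raw relation 1
  have raw1 : ∀ k l p q : Fin N,
      (∑ c, ∑ i, ∑ j, g i j * (Rm p k j c * Rm q c i l))
        = (if k = l then (1 : ℂ) else 0) * g q p := by
    intro k l p q
    have h := hwinv (L k l)
    rw [hcomulL, rep2_sum, heL] at h
    simp only [rep2_tmul, LinearMap.sum_apply, map_sum, map_smul, TensorProduct.map_tmul,
      hLe, TensorProduct.sum_tmul, TensorProduct.tmul_sum, TensorProduct.smul_tmul',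
      TensorProduct.tmul_smul, smul_smul, Finset.smul_sum] at h
    have h2 := congrArg (fun z => (v.tensorProduct v).repr z (p, q)) h
    simp only [Finsupp.finset_sum_apply, map_sum, map_smul, Finsupp.smul_apply,
      Module.Basis.tensorProduct_repr_tmul_apply, Module.Basis.repr_self,
      Finsupp.single_apply, Finsupp.coe_smul, Pi.smul_apply, smul_eq_mul, mul_ite, ite_mul,
      mul_zero, zero_mul, mul_one, one_mul, Finset.sum_ite_eq, Finset.sum_ite_eq',
      Finset.mem_univ, if_true] at h2
    calc (∑ c, ∑ i, ∑ j, g i j * (Rm p k j c * Rm q c i l))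
        = ∑ i, ∑ j, ∑ c, g i j * (Rm p k j c * Rm q c i l) := (sum3_rot _).symm
      _ = ∑ x, ∑ x1, ∑ x2, Rm q x2 x l * (g x x1 * Rm p k x1 x2) :=
          Finset.sum_congr rfl fun _ _ => Finset.sum_congr rfl fun _ _ =>
            Finset.sum_congr rfl fun _ _ => by ring
      _ = ∑ x, if k = l then if x = q then g x p else 0 else 0 := h2
      _ = (if k = l then (1 : ℂ) else 0) * g q p := by
          by_cases hkl : k = l <;> simp [hkl, Finset.sum_ite_eq']
  -- raw relation 3
  have raw3 : ∀ k l p q : Fin N,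
      (∑ c, ∑ i, ∑ j, g i j * (Rm c p l j * Rm k q c i))
        = (if k = l then (1 : ℂ) else 0) * g q p := by
    intro k l p q
    have h := hwinv (Me k l)
    rw [hcomulM, rep2_sum, heM] at h
    simp only [rep2_tmul, LinearMap.sum_apply, map_sum, map_smul, TensorProduct.map_tmul,
      hMe, TensorProduct.sum_tmul, TensorProduct.tmul_sum, TensorProduct.smul_tmul',
      TensorProduct.tmul_smul, smul_smul, Finset.smul_sum] at h
    have h2 := congrArg (fun z => (v.tensorProduct v).repr z (p, q)) h
    simp only [Finsupp.finset_sum_apply, map_sum, map_smul, Finsupp.smul_apply,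
      Module.Basis.tensorProduct_repr_tmul_apply, Module.Basis.repr_self,
      Finsupp.single_apply, Finsupp.coe_smul, Pi.smul_apply, smul_eq_mul, mul_ite, ite_mul,
      mul_zero, zero_mul, mul_one, one_mul, Finset.sum_ite_eq, Finset.sum_ite_eq',
      Finset.mem_univ, if_true] at h2
    calc (∑ c, ∑ i, ∑ j, g i j * (Rm c p l j * Rm k q c i))
        = ∑ i, ∑ j, ∑ c, g i j * (Rm c p l j * Rm k q c i) := (sum3_rot _).symm
      _ = ∑ x, ∑ x1, ∑ x2, Rm k q x2 x * (g x x1 * Rm x2 p l x1) :=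
          Finset.sum_congr rfl fun _ _ => Finset.sum_congr rfl fun _ _ =>
            Finset.sum_congr rfl fun _ _ => by ring
      _ = ∑ x, if k = l then if x = q then g x p else 0 else 0 := h2
      _ = (if k = l then (1 : ℂ) else 0) * g q p := by
          by_cases hkl : k = l <;> simp [hkl, Finset.sum_ite_eq']
  -- goal 1
  have goal1 : g i0 j0 * (if k0 = l0 then (1 : ℂ) else 0)
      = ∑ n, ∑ p, ∑ m, Rm j0 k0 n p * Rm i0 p m l0 * g m n := by
    rw [mul_comm, ← raw1 k0 l0 j0 i0, sum3_rot]
    refine Finset.sum_congr rfl fun n _ => Finset.sum_congr rfl fun p _ =>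
      Finset.sum_congr rfl fun m _ => by ring
  -- goal 3
  have goal3 : g i0 j0 * (if k0 = l0 then (1 : ℂ) else 0)
      = ∑ p, ∑ m, ∑ n, Rm k0 i0 p m * Rm p j0 l0 n * g m n := by
    rw [mul_comm, ← raw3 k0 l0 j0 i0]
    refine Finset.sum_congr rfl fun p _ => Finset.sum_congr rfl fun m _ =>
      Finset.sum_congr rfl fun n _ => by ring
  -- matrices for goal 2
  have goal2 : (if i0 = j0 then (1 : ℂ) else 0) * gt k0 l0
      = ∑ m, ∑ n, ∑ p, gt m n * Rm m i0 k0 p * Rm n p l0 j0 := by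
    set Atil : Matrix (Fin N × Fin N) (Fin N × Fin N) ℂ :=
      fun p q => Rm p.1 q.1 q.2 p.2 with hAtil
    set D0 : Matrix (Fin N × Fin N) (Fin N × Fin N) ℂ :=
      fun p q => Rm q.1 q.2 p.2 p.1 with hD0
    set Gp : Matrix (Fin N × Fin N) (Fin N × Fin N) ℂ :=
      fun p q => if p.1 = q.1 then g p.2 q.2 else 0 with hGp
    set Gpinv : Matrix (Fin N × Fin N) (Fin N × Fin N) ℂ :=
      fun p q => if p.1 = q.1 then gt q.2 p.2 else 0 with hGpinv
    set C : Matrix (Fin N × Fin N) (Fin N × Fin N) ℂ :=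
      fun p q => g p.1 q.1 * (if q.2 = p.2 then 1 else 0) with hC
    set Cinv : Matrix (Fin N × Fin N) (Fin N × Fin N) ℂ :=
      fun p q => gt q.1 p.1 * (if p.2 = q.2 then 1 else 0) with hCinv
    have hADC : Atil * (Gp * D0) = C := by
      ext ⟨i, l⟩ ⟨j, k⟩
      have hGD : ∀ pm : Fin N × Fin N, (Gp * D0) pm (j, k) = ∑ n, g pm.2 n * Rm j k n pm.1 := by
        intro pm
        rw [Matrix.mul_apply, Fintype.sum_prod_type]
        simp only [hGp, hD0, ite_mul, zero_mul]
        have hpull : ∀ x, (∑ n, if pm.1 = x then g pm.2 n * Rm j k n x else 0)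
            = if pm.1 = x then ∑ n, g pm.2 n * Rm j k n x else 0 := by
          intro x; by_cases h : pm.1 = x <;> simp [h]
        rw [Finset.sum_congr rfl fun x _ => hpull x, Finset.sum_ite_eq]
        simp
      rw [Matrix.mul_apply, Fintype.sum_prod_type]
      simp only [hGD, hAtil, hC]
      rw [mul_comm (g i j), ← raw1 k l j i]
      refine Finset.sum_congr rfl fun p _ => Finset.sum_congr rfl fun m _ => ?_
      rw [Finset.mul_sum]
      exact Finset.sum_congr rfl fun n _ => by ring
    have hCC : C * Cinv = 1 := by
      ext ⟨i, l⟩ ⟨a, b⟩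
      rw [Matrix.mul_apply, Fintype.sum_prod_type]
      simp only [hC, hCinv, Matrix.one_apply, Prod.mk.injEq]
      rw [Finset.sum_comm]
      have hterm : ∀ k j, (g i j * (if k = l then (1 : ℂ) else 0))
          * (gt a j * (if k = b then 1 else 0))
          = if k = l then (if k = b then g i j * gt a j else 0) else 0 := by
        intro k j; by_cases h1 : k = l <;> by_cases h2 : k = b <;> simp [h1, h2] <;> try ring
      simp only [hterm]
      have hpull : ∀ k, (∑ j, if k = l then (if k = b then g i j * gt a j else 0) else 0)
          = if k = l then (if k = b then ∑ j, g i j * gt a j else 0) else 0 := by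
        intro k; by_cases h1 : k = l <;> by_cases h2 : k = b <;> simp [h1, h2]
      rw [Finset.sum_congr rfl fun k _ => hpull k, Finset.sum_ite_eq' Finset.univ l]
      simp only [Finset.mem_univ, if_true, hg i a]
      by_cases h1 : i = a <;> by_cases h2 : l = b <;> simp [h1, h2]
    have hGG : Gpinv * Gp = 1 := by
      ext ⟨p, n⟩ ⟨p', n'⟩
      rw [Matrix.mul_apply, Fintype.sum_prod_type]
      simp only [hGpinv, hGp, Matrix.one_apply, Prod.mk.injEq]
      have hterm : ∀ p'' m, ((if p = p'' then gt m n else 0) * (if p'' = p' then g m n' else 0))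
          = if p = p'' then (if p'' = p' then g m n' * gt m n else 0) else 0 := by
        intro p'' m; by_cases h1 : p = p'' <;> by_cases h2 : p'' = p' <;> simp [h1, h2] <;>
          try ring
      simp only [hterm]
      have hpull : ∀ p'', (∑ m, if p = p'' then (if p'' = p' then g m n' * gt m n else 0) else 0)
          = if p = p'' then (if p'' = p' then ∑ m, g m n' * gt m n else 0) else 0 := by
        intro p''; by_cases h1 : p = p'' <;> by_cases h2 : p'' = p' <;> simp [h1, h2]
      rw [Finset.sum_congr rfl fun p'' _ => hpull p'', Finset.sum_ite_eq]
      simp only [Finset.mem_univ, if_true, hg' n' n]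
      by_cases h1 : p = p' <;> by_cases h2 : n = n' <;> simp [h1, h2] <;>
        exact fun hh => h2 (Eq.symm hh)
    have hX : Atil * ((Gp * D0) * Cinv) = 1 := by
      rw [← Matrix.mul_assoc, hADC, hCC]
    have hY : Gp * (((D0 * Cinv) * Atil)) = 1 := by
      rw [mul_eq_one_comm] at hX
      calc Gp * ((D0 * Cinv) * Atil) = ((Gp * D0) * Cinv) * Atil := by
            simp only [Matrix.mul_assoc]
        _ = 1 := hX
    have hfin : (D0 * Cinv) * Atil = Gpinv := by
      calc (D0 * Cinv) * Atil = (Gpinv * Gp) * ((D0 * Cinv) * Atil) := by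
            rw [hGG, Matrix.one_mul]
        _ = Gpinv * (Gp * ((D0 * Cinv) * Atil)) := by rw [Matrix.mul_assoc]
        _ = Gpinv := by rw [hY, Matrix.mul_one]
    have hentry := congrFun (congrFun hfin (j0, l0)) (i0, k0)
    have hDC : ∀ (i l : Fin N), (D0 * Cinv) (j0, l0) (i, l) = ∑ j, Rm j l l0 j0 * gt i j := by
      intro i l
      rw [Matrix.mul_apply, Fintype.sum_prod_type]
      simp only [hD0, hCinv]
      refine Finset.sum_congr rfl fun j _ => ?_
      have hterm : ∀ k, Rm j k l0 j0 * (gt i j * (if k = l then (1 : ℂ) else 0))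
          = if k = l then Rm j l l0 j0 * gt i j else 0 := by
        intro k
        by_cases hk : k = l
        · subst hk; simp; try ring
        · simp [hk]
      rw [Finset.sum_congr rfl fun k _ => hterm k, Finset.sum_ite_eq' Finset.univ l]
      simp
    rw [Matrix.mul_apply, Fintype.sum_prod_type] at hentry
    simp only [hDC, hAtil, hGpinv] at hentry
    have hlhs : (if i0 = j0 then (1 : ℂ) else 0) * gt k0 l0
        = if j0 = i0 then gt k0 l0 else 0 := by
      by_cases h : i0 = j0
      · simp [h]
      · rw [if_neg h, if_neg (fun hh => h (Eq.symm hh)), zero_mul]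
    rw [hlhs, ← hentry]
    rw [Finset.sum_congr rfl fun i _ =>
      Finset.sum_congr rfl fun l _ => Finset.sum_mul _ _ _]
    rw [Finset.sum_congr rfl fun i _ => Finset.sum_comm]
    exact Finset.sum_congr rfl fun i _ => Finset.sum_congr rfl fun j _ =>
      Finset.sum_congr rfl fun l _ => by ring
  -- matrices for goal 4
  have goal4 : (if i0 = j0 then (1 : ℂ) else 0) * gt k0 l0
      = ∑ m, ∑ n, ∑ p, gt m n * Rm i0 n p l0 * Rm p m j0 k0 := by
    set Atil : Matrix (Fin N × Fin N) (Fin N × Fin N) ℂ :=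
      fun p q => Rm q.1 p.1 p.2 q.2 with hAtil
    set D0 : Matrix (Fin N × Fin N) (Fin N × Fin N) ℂ :=
      fun p q => Rm q.2 q.1 p.1 p.2 with hD0
    set Gp : Matrix (Fin N × Fin N) (Fin N × Fin N) ℂ :=
      fun p q => if p.1 = q.1 then g q.2 p.2 else 0 with hGp
    set Gpinv : Matrix (Fin N × Fin N) (Fin N × Fin N) ℂ :=
      fun p q => if p.1 = q.1 then gt p.2 q.2 else 0 with hGpinv
    set C : Matrix (Fin N × Fin N) (Fin N × Fin N) ℂ :=
      fun p q => g q.1 p.1 * (if q.2 = p.2 then 1 else 0) with hC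
    set Cinv : Matrix (Fin N × Fin N) (Fin N × Fin N) ℂ :=
      fun p q => gt p.1 q.1 * (if p.2 = q.2 then 1 else 0) with hCinv
    have hADC : Atil * (Gp * D0) = C := by
      ext ⟨j, l⟩ ⟨i, k⟩
      have hGD : ∀ pn : Fin N × Fin N, (Gp * D0) pn (i, k) = ∑ m, g m pn.2 * Rm k i pn.1 m := by
        intro pn
        rw [Matrix.mul_apply, Fintype.sum_prod_type]
        simp only [hGp, hD0, ite_mul, zero_mul]
        have hpull : ∀ x, (∑ m, if pn.1 = x then g m pn.2 * Rm k i x m else 0)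
            = if pn.1 = x then ∑ m, g m pn.2 * Rm k i x m else 0 := by
          intro x; by_cases h : pn.1 = x <;> simp [h]
        rw [Finset.sum_congr rfl fun x _ => hpull x, Finset.sum_ite_eq]
        simp
      rw [Matrix.mul_apply, Fintype.sum_prod_type]
      simp only [hGD, hAtil, hC]
      rw [mul_comm (g i j), ← raw3 k l j i]
      refine Finset.sum_congr rfl fun p _ => ?_
      rw [Finset.sum_congr rfl fun n _ => Finset.mul_sum _ _ _, Finset.sum_comm]
      exact Finset.sum_congr rfl fun m _ => Finset.sum_congr rfl fun n _ => by ring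
    have hCC : C * Cinv = 1 := by
      ext ⟨j, l⟩ ⟨a, b⟩
      rw [Matrix.mul_apply, Fintype.sum_prod_type]
      simp only [hC, hCinv, Matrix.one_apply, Prod.mk.injEq]
      rw [Finset.sum_comm]
      have hterm : ∀ k i, (g i j * (if k = l then (1 : ℂ) else 0))
          * (gt i a * (if k = b then 1 else 0))
          = if k = l then (if k = b then g i j * gt i a else 0) else 0 := by
        intro k i; by_cases h1 : k = l <;> by_cases h2 : k = b <;> simp [h1, h2] <;> try ring
      simp only [hterm]
      have hpull : ∀ k, (∑ i, if k = l then (if k = b then g i j * gt i a else 0) else 0)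
          = if k = l then (if k = b then ∑ i, g i j * gt i a else 0) else 0 := by
        intro k; by_cases h1 : k = l <;> by_cases h2 : k = b <;> simp [h1, h2]
      rw [Finset.sum_congr rfl fun k _ => hpull k, Finset.sum_ite_eq' Finset.univ l]
      simp only [Finset.mem_univ, if_true, hg' j a]
      by_cases h1 : j = a <;> by_cases h2 : l = b <;> simp [h1, h2]
    have hGG : Gpinv * Gp = 1 := by
      ext ⟨p, m⟩ ⟨p', n'⟩
      rw [Matrix.mul_apply, Fintype.sum_prod_type]
      simp only [hGpinv, hGp, Matrix.one_apply, Prod.mk.injEq]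
      have hterm : ∀ p'' n, ((if p = p'' then gt m n else 0) * (if p'' = p' then g n' n else 0))
          = if p = p'' then (if p'' = p' then g n' n * gt m n else 0) else 0 := by
        intro p'' n; by_cases h1 : p = p'' <;> by_cases h2 : p'' = p' <;> simp [h1, h2] <;>
          try ring
      simp only [hterm]
      have hpull : ∀ p'', (∑ n, if p = p'' then (if p'' = p' then g n' n * gt m n else 0) else 0)
          = if p = p'' then (if p'' = p' then ∑ n, g n' n * gt m n else 0) else 0 := by
        intro p''; by_cases h1 : p = p'' <;> by_cases h2 : p'' = p' <;> simp [h1, h2]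
      rw [Finset.sum_congr rfl fun p'' _ => hpull p'', Finset.sum_ite_eq]
      simp only [Finset.mem_univ, if_true, hg n' m]
      by_cases h1 : p = p' <;> by_cases h2 : m = n' <;> simp [h1, h2] <;>
        exact fun hh => h2 (Eq.symm hh)
    have hX : Atil * ((Gp * D0) * Cinv) = 1 := by
      rw [← Matrix.mul_assoc, hADC, hCC]
    have hY : Gp * (((D0 * Cinv) * Atil)) = 1 := by
      rw [mul_eq_one_comm] at hX
      calc Gp * ((D0 * Cinv) * Atil) = ((Gp * D0) * Cinv) * Atil := by
            simp only [Matrix.mul_assoc]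
        _ = 1 := hX
    have hfin : (D0 * Cinv) * Atil = Gpinv := by
      calc (D0 * Cinv) * Atil = (Gpinv * Gp) * ((D0 * Cinv) * Atil) := by
            rw [hGG, Matrix.one_mul]
        _ = Gpinv * (Gp * ((D0 * Cinv) * Atil)) := by rw [Matrix.mul_assoc]
        _ = Gpinv := by rw [hY, Matrix.mul_one]
    have hentry := congrFun (congrFun hfin (j0, k0)) (i0, l0)
    have hDC : ∀ (i l : Fin N), (D0 * Cinv) (j0, k0) (i, l) = ∑ j, Rm l j j0 k0 * gt j i := by
      intro i l
      rw [Matrix.mul_apply, Fintype.sum_prod_type]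
      simp only [hD0, hCinv]
      refine Finset.sum_congr rfl fun j _ => ?_
      have hterm : ∀ k, Rm k j j0 k0 * (gt j i * (if k = l then (1 : ℂ) else 0))
          = if k = l then Rm l j j0 k0 * gt j i else 0 := by
        intro k
        by_cases hk : k = l
        · subst hk; simp; try ring
        · simp [hk]
      rw [Finset.sum_congr rfl fun k _ => hterm k, Finset.sum_ite_eq' Finset.univ l]
      simp
    rw [Matrix.mul_apply, Fintype.sum_prod_type] at hentry
    simp only [hDC, hAtil, hGpinv] at hentry
    have hlhs : (if i0 = j0 then (1 : ℂ) else 0) * gt k0 l0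
        = if j0 = i0 then gt k0 l0 else 0 := by
      by_cases h : i0 = j0
      · simp [h]
      · rw [if_neg h, if_neg (fun hh => h (Eq.symm hh)), zero_mul]
    rw [hlhs, ← hentry]
    rw [Finset.sum_congr rfl fun i _ =>
      Finset.sum_congr rfl fun l _ => Finset.sum_mul _ _ _]
    rw [sum3_rot]
    exact Finset.sum_congr rfl fun m _ => Finset.sum_congr rfl fun n _ =>
      Finset.sum_congr rfl fun p _ => by ring
  exact ⟨goal1, goal2, goal3, goal4⟩
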